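/- Let 𝕋 = ℝ/2πℤ with Lebesgue measure, and let g : 𝕋 → ℝ be continuous with g ≥ 0 and ∫_𝕋 g = 1. For each integer k define β_k := ∫_𝕋 |g(x)·(e^{−ikx}/√(2π) − ∫_𝕋 g(y) e^{−iky}/√(2π) dy)|² dx. Then β_0 = 0 and β_k > 0 for every integer k ≠ 0. -/

import Mathlib

open MeasureTheory

instance : Fact ((0 : ℝ) < 2 * Real.pi) := ⟨by positivity⟩

/-- `β_k = ‖G(e^{-ikx}/√(2π))‖²_{L²(𝕋)}` where
`(Gℓ)(x) = g(x) (ℓ(x) − ∫ g(y) ℓ(y) dy)` on `𝕋 = ℝ/2πℤ`. -/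
noncomputable def betaCoef (g : AddCircle (2 * Real.pi) → ℝ) (k : ℤ) : ℝ :=
  ∫ x : AddCircle (2 * Real.pi),
    ‖(g x : ℂ) * (fourier (-k) x / (Real.sqrt (2 * Real.pi) : ℂ) -
        ∫ y : AddCircle (2 * Real.pi),
          (g y : ℂ) * (fourier (-k) y / (Real.sqrt (2 * Real.pi) : ℂ)))‖ ^ 2

/-- If `g : 𝕋 → ℝ` is continuous, nonnegative, with `∫ g = 1`, then `β_0 = 0`
and `β_k > 0` for every `k ≠ 0`. -/
theorem betaCoef_zero_and_pos (g : AddCircle (2 * Real.pi) → ℝ)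
    (hg_cont : Continuous g) (hg_nonneg : ∀ x, 0 ≤ g x)
    (hg_int : ∫ x : AddCircle (2 * Real.pi), g x = 1) :
    betaCoef g 0 = 0 ∧ ∀ k : ℤ, k ≠ 0 → 0 < betaCoef g k := by
  constructor
  · -- β₀ = 0
    have h1 : ∫ y : AddCircle (2 * Real.pi),
        (g y : ℂ) * (fourier (-(0:ℤ)) y / (Real.sqrt (2 * Real.pi) : ℂ))
        = 1 / (Real.sqrt (2 * Real.pi) : ℂ) := by
      simp only [neg_zero, fourier_zero]
      rw [integral_mul_const]
      have : ∫ y : AddCircle (2 * Real.pi), (g y : ℂ)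
          = ((∫ y : AddCircle (2 * Real.pi), g y : ℝ) : ℂ) := by
        exact integral_ofReal
      rw [this, hg_int]
      simp
    unfold betaCoef
    rw [h1]
    simp [fourier_zero]
  · -- β_k > 0 for k ≠ 0
    intro k hk
    set c : ℂ := ∫ y : AddCircle (2 * Real.pi),
        (g y : ℂ) * (fourier (-k) y / (Real.sqrt (2 * Real.pi) : ℂ)) with hc
    set f : AddCircle (2 * Real.pi) → ℝ := fun x =>
      ‖(g x : ℂ) * (fourier (-k) x / (Real.sqrt (2 * Real.pi) : ℂ) - c)‖ ^ 2 with hf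
    have hbeta : betaCoef g k = ∫ x : AddCircle (2 * Real.pi), f x := rfl
    have hfcont : Continuous f := by
      apply Continuous.pow
      apply Continuous.norm
      exact (Complex.continuous_ofReal.comp hg_cont).mul
        (((map_continuous (fourier (-k))).div_const _).sub continuous_const)
    have hfint : Integrable f :=
      hfcont.integrable_of_hasCompactSupport (HasCompactSupport.of_compactSpace f)
    have hfnonneg : 0 ≤ f := fun x => by positivity
    -- find a point where f is nonzero
    have hx : ∃ x, f x ≠ 0 := by
      by_contra hcon
      push_neg at hcon
      have hzero : ∀ x : AddCircle (2 * Real.pi),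
          g x = 0 ∨ fourier (-k) x = c * (Real.sqrt (2 * Real.pi) : ℂ) := by
        intro x
        have hx0 := hcon x
        simp only [hf] at hx0
        have hprod : (g x : ℂ) * (fourier (-k) x / (Real.sqrt (2 * Real.pi) : ℂ) - c) = 0 :=
          norm_eq_zero.mp (pow_eq_zero_iff two_ne_zero |>.mp hx0)
        rcases mul_eq_zero.mp hprod with h | h
        · left; exact_mod_cast h
        · right
          have hs : (Real.sqrt (2 * Real.pi) : ℂ) ≠ 0 := by
            simp only [ne_eq, Complex.ofReal_eq_zero]
            positivity
          have h2 := sub_eq_zero.mp h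
          rwa [div_eq_iff hs] at h2
      -- g is positive somewhere
      obtain ⟨a, ha⟩ : ∃ a : ℝ, 0 < g (a : AddCircle (2 * Real.pi)) := by
        by_contra hg0
        push_neg at hg0
        have : ∀ x : AddCircle (2 * Real.pi), g x = 0 := by
          intro x
          induction x using QuotientAddGroup.induction_on with
          | H a => exact le_antisymm (hg0 a) (hg_nonneg _)
        rw [integral_congr_ae (Filter.Eventually.of_forall this)] at hg_int
        simp at hg_int
      -- g positive on a neighborhood
      have hcoe : Continuous ((↑) : ℝ → AddCircle (2 * Real.pi)) :=
        AddCircle.continuous_mk' _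
      have hψ : Continuous fun t : ℝ => g ((a + t : ℝ) : AddCircle (2 * Real.pi)) :=
        hg_cont.comp (hcoe.comp (continuous_const.add continuous_id))
      have h0 : (0 : ℝ) < g ((a + 0 : ℝ) : AddCircle (2 * Real.pi)) := by simpa using ha
      obtain ⟨δ, hδpos, hδ⟩ : ∃ δ > 0, ∀ t : ℝ, |t| < δ →
          0 < g ((a + t : ℝ) : AddCircle (2 * Real.pi)) := by
        have hev : ∀ᶠ t in nhds (0:ℝ), 0 < g ((a + t : ℝ) : AddCircle (2 * Real.pi)) :=
          ContinuousAt.eventually_lt continuousAt_const (hψ.continuousAt (x := 0))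
            (by simpa using ha)
        rw [Metric.eventually_nhds_iff] at hev
        obtain ⟨ε, hε, h⟩ := hev
        exact ⟨ε, hε, fun t ht => h (by simpa [Real.dist_eq] using ht)⟩
      -- so fourier (-k) is constant near a
      have hconst : ∀ t : ℝ, |t| < δ →
          fourier (-k) ((a + t : ℝ) : AddCircle (2 * Real.pi))
            = c * (Real.sqrt (2 * Real.pi) : ℂ) := by
        intro t ht
        rcases hzero ((a + t : ℝ) : AddCircle (2 * Real.pi)) with h | h
        · exact absurd h (ne_of_gt (hδ t ht))
        · exact h
      -- pick a small positive t
      have hkabs : (1 : ℝ) ≤ |(k : ℝ)| := by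
        have : (1 : ℤ) ≤ |k| := Int.one_le_abs hk
        exact_mod_cast this
      set t : ℝ := min δ (Real.pi / |(k : ℝ)|) / 2 with htdef
      have hkpos : (0 : ℝ) < |(k : ℝ)| := lt_of_lt_of_le one_pos hkabs
      have htpos : 0 < t := by positivity
      have htδ : |t| < δ := by
        rw [abs_of_pos htpos]
        calc t ≤ δ / 2 := by apply div_le_div_of_nonneg_right (min_le_left _ _); norm_num
        _ < δ := by linarith
      have htk : |(k : ℝ)| * t < 2 * Real.pi := by
        have h1 : t ≤ (Real.pi / |(k : ℝ)|) / 2 := by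
          apply div_le_div_of_nonneg_right (min_le_right _ _); norm_num
        have h2 : |(k : ℝ)| * t ≤ |(k : ℝ)| * ((Real.pi / |(k : ℝ)|) / 2) :=
          mul_le_mul_of_nonneg_left h1 (le_of_lt hkpos)
        have h3 : |(k : ℝ)| * ((Real.pi / |(k : ℝ)|) / 2) = Real.pi / 2 := by
          field_simp
        have := Real.pi_pos
        nlinarith
      -- the two fourier values agree
      have heq : fourier (-k) ((a + t : ℝ) : AddCircle (2 * Real.pi))
          = fourier (-k) ((a + 0 : ℝ) : AddCircle (2 * Real.pi)) := by
        rw [hconst t htδ, hconst 0 (by simpa using hδpos)]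
      rw [fourier_coe_apply, fourier_coe_apply,
        Complex.exp_eq_exp_iff_exists_int] at heq
      obtain ⟨n, hn⟩ := heq
      push_cast at hn
      have hpi : (Real.pi : ℂ) ≠ 0 := by
        simp only [ne_eq, Complex.ofReal_eq_zero]
        exact Real.pi_ne_zero
      have hreal : -(k : ℝ) * t = n * (2 * Real.pi) := by
        field_simp at hn
        have hfac : ((4 * Real.pi ^ 2 : ℝ) : ℂ) * Complex.I ≠ 0 := by
          apply mul_ne_zero _ Complex.I_ne_zero
          simp only [ne_eq, Complex.ofReal_eq_zero]
          positivity
        have key : ((-(k : ℝ) * t : ℝ) : ℂ) * (((4 * Real.pi ^ 2 : ℝ) : ℂ) * Complex.I)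
            = ((n * (2 * Real.pi) : ℝ) : ℂ) * (((4 * Real.pi ^ 2 : ℝ) : ℂ) * Complex.I) := by
          push_cast
          linear_combination (4 * (Real.pi : ℂ) ^ 2 * Complex.I) * hn
        have := mul_right_cancel₀ hfac key
        exact_mod_cast this
      -- contradiction: |k|·t < 2π but -k t = 2πn
      rcases eq_or_ne n 0 with hn0 | hn0
      · rw [hn0] at hreal
        simp at hreal
        rcases hreal with h | h
        · exact hk (by exact_mod_cast h)
        · exact absurd h (ne_of_gt htpos)
      · have habs : |(-(k : ℝ) * t)| = |(n : ℝ)| * (2 * Real.pi) := by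
          rw [hreal, abs_mul, abs_of_pos (by positivity : (0:ℝ) < 2 * Real.pi)]
        have h1 : |(-(k : ℝ) * t)| = |(k : ℝ)| * t := by
          rw [abs_mul, abs_neg, abs_of_pos htpos]
        have h2 : (1 : ℝ) ≤ |(n : ℝ)| := by
          have : (1 : ℤ) ≤ |n| := Int.one_le_abs hn0
          exact_mod_cast this
        have := Real.pi_pos
        nlinarith
    obtain ⟨x, hxne⟩ := hx
    rw [hbeta]
    exact integral_pos_of_integrable_nonneg_nonzero hfcont hfint hfnonneg hxne
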